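/- In any Coxeter system (W, S), if a word w in the generators S represents the identity element of W, then each letter appearing in w appears at least twice. -/

import Mathlib

open Finsupp

namespace CoxAux

set_option linter.unusedSectionVars false
set_option maxHeartbeats 1000000

variable {B : Type*} [DecidableEq B]

noncomputable def beta (M : CoxeterMatrix B) (k l : B) : ℝ := -Real.cos (Real.pi / (M k l))

lemma beta_diag (M : CoxeterMatrix B) (k : B) : beta M k k = 1 := by
  simp [beta, M.diagonal k]

lemma beta_symm (M : CoxeterMatrix B) (k l : B) : beta M k l = beta M l k := by
  rw [beta, beta, M.symmetric]

noncomputable def lform (M : CoxeterMatrix B) (k : B) : (B →₀ ℝ) →ₗ[ℝ] ℝ :=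
  Finsupp.linearCombination ℝ (beta M k)

noncomputable def sigma (M : CoxeterMatrix B) (k : B) : Module.End ℝ (B →₀ ℝ) :=
  LinearMap.id - (2 : ℝ) •
    ((LinearMap.toSpanSingleton ℝ (B →₀ ℝ) (Finsupp.single k 1)) ∘ₗ (lform M k))

lemma sigma_apply (M : CoxeterMatrix B) (k : B) (v : B →₀ ℝ) :
    sigma M k v = v - (2 * lform M k v) • Finsupp.single k 1 := by
  simp [sigma, LinearMap.toSpanSingleton_apply, smul_smul]

lemma lform_single (M : CoxeterMatrix B) (k l : B) :
    lform M k (Finsupp.single l 1) = beta M k l := by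
  simp [lform]

lemma sigma_apply_ne (M : CoxeterMatrix B) {k i : B} (h : k ≠ i) (v : B →₀ ℝ) :
    (sigma M k v) i = v i := by
  rw [sigma_apply]
  simp [Finsupp.single_apply, h]

lemma sigma_single (M : CoxeterMatrix B) (k l : B) :
    sigma M k (Finsupp.single l 1)
      = Finsupp.single l 1 - (2 * beta M k l) • Finsupp.single k 1 := by
  rw [sigma_apply, lform_single]

lemma sigma_sq (M : CoxeterMatrix B) (k : B) :
    sigma M k * sigma M k = 1 := by
  apply LinearMap.ext
  intro v
  have h1 : lform M k (sigma M k v) = -(lform M k v) := by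
    rw [sigma_apply, map_sub, map_smul, lform_single, beta_diag]
    simp only [smul_eq_mul]
    ring
  rw [Module.End.mul_apply, sigma_apply M k (sigma M k v), h1, sigma_apply]
  rw [Module.End.one_apply]
  module

noncomputable def CG (d1 d2 : ℝ) : ℕ → ℝ × ℝ
  | 0 => (1, 0)
  | t + 1 => ((CG d1 d2 t).1 * d1 - (CG d1 d2 t).2 * d2, (CG d1 d2 t).2 * d1 + (CG d1 d2 t).1)

lemma CG_trig {θ : ℝ} (hs : Real.sin θ ≠ 0) (t : ℕ) :
    CG (Real.cos θ) (Real.sin θ ^ 2) t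
      = (Real.cos (t * θ), Real.sin (t * θ) / Real.sin θ) := by
  induction t with
  | zero => simp [CG]
  | succ t ih =>
    rw [CG, ih]
    have h1 : ((t : ℝ) + 1) * θ = t * θ + θ := by ring
    push_cast
    rw [h1, Real.cos_add, Real.sin_add]
    simp only [Prod.mk.injEq]
    refine ⟨by field_simp, by field_simp; try ring⟩

lemma sum_exp_eq_zero {m : ℕ} (hm : 2 ≤ m) :
    (∑ t ∈ Finset.range m,
      Complex.exp (((2 * Real.pi / m : ℝ) : ℂ) * Complex.I) ^ t) = 0 := by
  set θ : ℝ := 2 * Real.pi / m with hθ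
  have hm0 : (0:ℝ) < (m:ℝ) := by positivity
  have hm2 : (2:ℝ) ≤ (m:ℝ) := by exact_mod_cast hm
  have hθpos : 0 < θ := by rw [hθ]; positivity
  have hθlt : θ < 2 * Real.pi := by
    rw [hθ, div_lt_iff₀ hm0]
    nlinarith [Real.pi_pos, mul_le_mul_of_nonneg_left hm2 Real.pi_pos.le]
  set x : ℂ := Complex.exp ((θ : ℂ) * Complex.I) with hx
  have hxm : x ^ m = 1 := by
    rw [hx, ← Complex.exp_nat_mul]
    have hmθ : (m : ℝ) * θ = 2 * Real.pi := by
      rw [hθ]; field_simp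
    have h2 : ((m : ℕ) : ℂ) * ((θ : ℝ) : ℂ) = ((2 * Real.pi : ℝ) : ℂ) := by
      exact_mod_cast congrArg (fun r : ℝ => (r : ℂ)) hmθ
    rw [← mul_assoc, h2]
    push_cast
    exact Complex.exp_two_pi_mul_I
  have hx1 : x ≠ 1 := by
    intro h
    have hre : Real.cos θ = 1 := by
      have := congrArg Complex.re h
      rwa [hx, Complex.exp_ofReal_mul_I_re] at this
    have := (Real.cos_eq_one_iff_of_lt_of_lt (by linarith) hθlt).mp hre
    linarith
  rw [geom_sum_eq hx1 m, hxm]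
  simp

lemma sum_CG {m : ℕ} (hm : 3 ≤ m) :
    (∑ t ∈ Finset.range m, (CG (Real.cos (2 * Real.pi / m)) (Real.sin (2 * Real.pi / m) ^ 2) t).1) = 0
    ∧ (∑ t ∈ Finset.range m, (CG (Real.cos (2 * Real.pi / m)) (Real.sin (2 * Real.pi / m) ^ 2) t).2) = 0 := by
  set θ : ℝ := 2 * Real.pi / m with hθ
  have hm0 : (0:ℝ) < (m:ℝ) := by positivity
  have hm3 : (3:ℝ) ≤ (m:ℝ) := by exact_mod_cast hm
  have hθpos : 0 < θ := by rw [hθ]; positivity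
  have hθlt : θ < Real.pi := by
    rw [hθ, div_lt_iff₀ hm0]
    nlinarith [Real.pi_pos, mul_le_mul_of_nonneg_left hm3 Real.pi_pos.le]
  have hs : Real.sin θ ≠ 0 := by
    have := Real.sin_pos_of_pos_of_lt_pi hθpos hθlt
    linarith
  have hexp := sum_exp_eq_zero (by omega : 2 ≤ m)
  rw [← hθ] at hexp
  set x : ℂ := Complex.exp ((θ : ℂ) * Complex.I) with hx
  have hterm : ∀ t : ℕ, x ^ t = Complex.exp ((((t : ℝ) * θ : ℝ) : ℂ) * Complex.I) := by
    intro t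
    rw [hx, ← Complex.exp_nat_mul]
    congr 1
    push_cast
    ring
  have hcos : (∑ t ∈ Finset.range m, Real.cos (t * θ)) = 0 := by
    have := congrArg Complex.re hexp
    rw [Complex.re_sum] at this
    calc (∑ t ∈ Finset.range m, Real.cos (t * θ))
        = ∑ t ∈ Finset.range m, (x ^ t).re := by
          refine Finset.sum_congr rfl fun t _ => ?_
          rw [hterm t, Complex.exp_ofReal_mul_I_re]
      _ = 0 := this
  have hsin : (∑ t ∈ Finset.range m, Real.sin (t * θ)) = 0 := by
    have := congrArg Complex.im hexp
    rw [Complex.im_sum] at this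
    calc (∑ t ∈ Finset.range m, Real.sin (t * θ))
        = ∑ t ∈ Finset.range m, (x ^ t).im := by
          refine Finset.sum_congr rfl fun t _ => ?_
          rw [hterm t, Complex.exp_ofReal_mul_I_im]
      _ = 0 := this
  constructor
  · rw [Finset.sum_congr rfl fun t _ => congrArg Prod.fst (CG_trig hs t)]
    exact hcos
  · rw [Finset.sum_congr rfl fun t _ => congrArg Prod.snd (CG_trig hs t)]
    rw [← Finset.sum_div, hsin, zero_div]

section Dihedral

variable (M : CoxeterMatrix B) {k l : B}

lemma rho_ek (hkl : k ≠ l) :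
    (sigma M k * sigma M l) (Finsupp.single k 1)
      = (4 * (beta M k l) ^ 2 - 1) • Finsupp.single k 1
        + (-(2 * beta M k l)) • Finsupp.single l 1 := by
  rw [Module.End.mul_apply, sigma_single, beta_symm M l k, map_sub, map_smul,
    sigma_single, sigma_single, beta_diag]
  module

lemma rho_el (hkl : k ≠ l) :
    (sigma M k * sigma M l) (Finsupp.single l 1)
      = (2 * beta M k l) • Finsupp.single k 1 + (-1 : ℝ) • Finsupp.single l 1 := by
  rw [Module.End.mul_apply, sigma_single, beta_diag, map_sub, map_smul, sigma_single]
  module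

lemma rho_pow (hkl : k ≠ l) (t : ℕ) :
    ((sigma M k * sigma M l) ^ t) (Finsupp.single k 1)
      = ((CG (2 * (beta M k l) ^ 2 - 1) (4 * (beta M k l) ^ 2 - 4 * (beta M k l) ^ 4) t).1
          + 2 * (beta M k l) ^ 2
            * (CG (2 * (beta M k l) ^ 2 - 1) (4 * (beta M k l) ^ 2 - 4 * (beta M k l) ^ 4) t).2)
          • Finsupp.single k 1
        + (-(2 * beta M k l)
            * (CG (2 * (beta M k l) ^ 2 - 1) (4 * (beta M k l) ^ 2 - 4 * (beta M k l) ^ 4) t).2)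
          • Finsupp.single l 1
    ∧ ((sigma M k * sigma M l) ^ t) (Finsupp.single l 1)
      = (2 * beta M k l
            * (CG (2 * (beta M k l) ^ 2 - 1) (4 * (beta M k l) ^ 2 - 4 * (beta M k l) ^ 4) t).2)
          • Finsupp.single k 1
        + ((CG (2 * (beta M k l) ^ 2 - 1) (4 * (beta M k l) ^ 2 - 4 * (beta M k l) ^ 4) t).1
            - 2 * (beta M k l) ^ 2
              * (CG (2 * (beta M k l) ^ 2 - 1) (4 * (beta M k l) ^ 2 - 4 * (beta M k l) ^ 4) t).2)
          • Finsupp.single l 1 := by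
  set c := beta M k l with hc
  induction t with
  | zero =>
    constructor <;> (rw [pow_zero, Module.End.one_apply]; simp [CG]; try module)
  | succ t ih =>
    obtain ⟨ih1, ih2⟩ := ih
    constructor
    · rw [pow_succ', Module.End.mul_apply, ih1, map_add, map_smul, map_smul,
        rho_ek M hkl, rho_el M hkl, CG]
      module
    · rw [pow_succ', Module.End.mul_apply, ih2, map_add, map_smul, map_smul,
        rho_ek M hkl, rho_el M hkl, CG]
      module

end Dihedral

namespace Rel

variable (M : CoxeterMatrix B) {k l : B}

lemma relation (hkl : k ≠ l) (hm : 2 ≤ M k l) :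
    (sigma M k * sigma M l) ^ (M k l) = 1 := by
  set m := M k l with hmdef
  set c := beta M k l with hc
  set d1 : ℝ := 2 * c ^ 2 - 1 with hd1def
  set d2 : ℝ := 4 * c ^ 2 - 4 * c ^ 4 with hd2def
  have hS : (∑ t ∈ Finset.range m, (CG d1 d2 t).1) = 0
      ∧ c * (∑ t ∈ Finset.range m, (CG d1 d2 t).2) = 0 := by
    rcases eq_or_lt_of_le hm with h2 | h3
    · have hc0 : c = 0 := by
        rw [hc, beta, ← hmdef, ← h2]
        norm_num [Real.cos_pi_div_two]
      constructor
      · rw [← h2, Finset.sum_range_succ, Finset.sum_range_one]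
        simp [CG, hd1def, hc0]
      · rw [hc0, zero_mul]
    · have hm3 : 3 ≤ m := h3
      have hd1 : Real.cos (2 * Real.pi / m) = d1 := by
        rw [show (2 * Real.pi / (m:ℝ)) = 2 * (Real.pi / m) by ring, Real.cos_two_mul]
        rw [hd1def, hc, beta, ← hmdef]
        ring
      have hd2 : Real.sin (2 * Real.pi / m) ^ 2 = d2 := by
        rw [Real.sin_sq, hd1, hd1def, hd2def]
        ring
      obtain ⟨hA, hB⟩ := sum_CG hm3
      rw [hd1, hd2] at hA hB
      exact ⟨hA, by rw [hB, mul_zero]⟩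
  obtain ⟨hS1, hS2⟩ := hS
  set N : Module.End ℝ (B →₀ ℝ) := ∑ t ∈ Finset.range m, (sigma M k * sigma M l) ^ t with hN
  have hsum_smul : ∀ (a b : ℕ → ℝ),
      (∑ t ∈ Finset.range m, (a t • Finsupp.single k (1:ℝ) + b t • Finsupp.single l 1))
        = (∑ t ∈ Finset.range m, a t) • Finsupp.single k 1
          + (∑ t ∈ Finset.range m, b t) • Finsupp.single l 1 := by
    intro a b
    rw [Finset.sum_add_distrib, ← Finset.sum_smul, ← Finset.sum_smul]
  have hNk : N (Finsupp.single k 1) = 0 := by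
    rw [hN, LinearMap.sum_apply,
      Finset.sum_congr rfl fun t _ => (rho_pow M hkl t).1, hsum_smul]
    have e1 : (∑ t ∈ Finset.range m, ((CG d1 d2 t).1 + 2 * c ^ 2 * (CG d1 d2 t).2)) = 0 := by
      rw [Finset.sum_add_distrib, ← Finset.mul_sum, hS1]
      have : 2 * c ^ 2 * (∑ t ∈ Finset.range m, (CG d1 d2 t).2)
          = 2 * c * (c * ∑ t ∈ Finset.range m, (CG d1 d2 t).2) := by ring
      rw [this, hS2]
      ring
    have e2 : (∑ t ∈ Finset.range m, (-(2 * c) * (CG d1 d2 t).2)) = 0 := by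
      rw [← Finset.mul_sum]
      have : -(2*c) * (∑ t ∈ Finset.range m, (CG d1 d2 t).2)
          = -2 * (c * ∑ t ∈ Finset.range m, (CG d1 d2 t).2) := by ring
      rw [this, hS2, mul_zero]
    rw [e1, e2]
    simp
  have hNl : N (Finsupp.single l 1) = 0 := by
    rw [hN, LinearMap.sum_apply,
      Finset.sum_congr rfl fun t _ => (rho_pow M hkl t).2, hsum_smul]
    have e1 : (∑ t ∈ Finset.range m, (2 * c * (CG d1 d2 t).2)) = 0 := by
      rw [← Finset.mul_sum]
      have : 2*c * (∑ t ∈ Finset.range m, (CG d1 d2 t).2)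
          = 2 * (c * ∑ t ∈ Finset.range m, (CG d1 d2 t).2) := by ring
      rw [this, hS2, mul_zero]
    have e2 : (∑ t ∈ Finset.range m, ((CG d1 d2 t).1 - 2 * c ^ 2 * (CG d1 d2 t).2)) = 0 := by
      rw [Finset.sum_sub_distrib, ← Finset.mul_sum, hS1]
      have : 2 * c ^ 2 * (∑ t ∈ Finset.range m, (CG d1 d2 t).2)
          = 2 * c * (c * ∑ t ∈ Finset.range m, (CG d1 d2 t).2) := by ring
      rw [this, hS2]
      ring
    rw [e1, e2]
    simp
  have hrho1 : ∀ v : (B →₀ ℝ), ((sigma M k * sigma M l) - 1) v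
      = (-(2 * lform M k v) + 4 * c * (lform M l v)) • Finsupp.single k 1
        + (-(2 * lform M l v)) • Finsupp.single l 1 := by
    intro v
    have h1 : lform M k (sigma M l v) = lform M k v - 2 * lform M l v * c := by
      rw [sigma_apply, map_sub, map_smul, lform_single, hc]
      simp only [smul_eq_mul]
    rw [LinearMap.sub_apply, Module.End.one_apply, Module.End.mul_apply,
      sigma_apply M k (sigma M l v), h1, sigma_apply M l v]
    module
  have key : (sigma M k * sigma M l) ^ m - 1 = 0 := by
    rw [← geom_sum_mul (sigma M k * sigma M l) m]
    apply LinearMap.ext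
    intro v
    rw [LinearMap.zero_apply, Module.End.mul_apply, ← hN, hrho1 v, map_add, map_smul, map_smul,
      hNk, hNl]
    simp
  apply LinearMap.ext
  intro v
  have hk := LinearMap.congr_fun key v
  rw [LinearMap.sub_apply, Module.End.one_apply, LinearMap.zero_apply, sub_eq_zero] at hk
  rw [Module.End.one_apply]
  exact hk

end Rel

theorem liftable (M : CoxeterMatrix B) : M.IsLiftable (sigma M) := by
  intro k l
  rcases eq_or_ne k l with rfl | hkl
  · rw [M.diagonal, pow_one, sigma_sq]
  · rcases Nat.eq_zero_or_pos (M k l) with h0 | hpos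
    · rw [h0, pow_zero]
    · have h1 : M k l ≠ 1 := M.off_diagonal k l hkl
      have hm : 2 ≤ M k l := by omega
      exact Rel.relation M hkl hm

variable {W : Type*} [Group W]

lemma coord_fixed {M : CoxeterMatrix B} (cs : CoxeterSystem M W)
    (τ : List B) (i : B) (hi : i ∉ τ) (v : B →₀ ℝ) :
    ((cs.lift ⟨sigma M, liftable M⟩) (cs.wordProd τ) v) i = v i := by
  induction τ generalizing v with
  | nil => rw [CoxeterSystem.wordProd_nil, map_one, Module.End.one_apply]
  | cons c τ ih =>
    have hci : c ≠ i := fun h => hi (h ▸ List.mem_cons_self)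
    have hiτ : i ∉ τ := fun h => hi (List.mem_cons_of_mem c h)
    rw [CoxeterSystem.wordProd_cons, map_mul, Module.End.mul_apply,
      CoxeterSystem.lift_apply_simple, sigma_apply_ne M hci, ih hiτ]

end CoxAux

/-- **Lemma 5.1.** In any Coxeter system, if a word in the generators represents the identity
element, then each letter appearing in it appears at least twice. -/
theorem letter_count_of_wordProd_eq_one {B W : Type*} [DecidableEq B] [Group W]
    {M : CoxeterMatrix B} (cs : CoxeterSystem M W)
    (w : List B) (hw : cs.wordProd w = 1) :
    ∀ i ∈ w, 2 ≤ w.count i := by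
  intro i hi
  by_contra hlt
  push_neg at hlt
  have h1 : w.count i = 1 := by
    have := List.count_pos_iff.mpr hi
    omega
  obtain ⟨u, v, rfl⟩ := List.append_of_mem hi
  rw [List.count_append, List.count_cons_self] at h1
  have hu : i ∉ u := by
    rw [← List.count_eq_zero]
    omega
  have hv : i ∉ v := by
    rw [← List.count_eq_zero]
    omega
  rw [cs.wordProd_append, cs.wordProd_cons] at hw
  have hsi : cs.simple i = cs.wordProd (u.reverse ++ v.reverse) := by
    rw [cs.wordProd_append, cs.wordProd_reverse, cs.wordProd_reverse]
    have h2 : cs.simple i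
        = (cs.wordProd u)⁻¹ * (cs.wordProd u * (cs.simple i * cs.wordProd v)) * (cs.wordProd v)⁻¹ := by
      group
    rw [hw, mul_one] at h2
    exact h2
  have hnot : i ∉ u.reverse ++ v.reverse := by
    simp [List.mem_append, List.mem_reverse, hu, hv]
  have heval := CoxAux.coord_fixed cs (u.reverse ++ v.reverse) i hnot (Finsupp.single i 1)
  rw [← hsi, CoxeterSystem.lift_apply_simple, CoxAux.sigma_single, CoxAux.beta_diag] at heval
  simp [Finsupp.single_apply] at heval
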